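/- Let q be an odd prime power with q ≡ 1 mod 4, and let α₁, …, α_{(q-1)/4} ∈ F_{q²} be chosen so that the union of {α_i, -α_i, 1/α_i, -1/α_i} over i is exactly the set of roots of T^{q+1} + 1 that are not roots of T² + 1. Then in F_q[w] (with w = uv a formal variable), one has the polynomial identity: the polynomial U^q V + U V^q, rewritten after substituting the relation, satisfies u^q v + u v^q = (2uv + 1)·∏_{i=1}^{(q-1)/4}(1 + 4uv - (α_i + α_i^q)²(uv)²), where u = 1/(x^q - x) and v = x^{q+1}/(x^q - x) in F_q(x). -/

import Mathlib

open Polynomial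

lemma aux_roots {K : Type*} [Field K] [Fintype K] {q : ℕ} (hq2 : 2 ≤ q) (hodd : Odd q)
    (hcard : Fintype.card K = q ^ 2) :
    Multiset.card (X ^ (q+1) + 1 : K[X]).roots = q + 1 ∧ (X ^ (q+1) + 1 : K[X]).roots.Nodup ∧
      ((X ^ (q+1) + 1 : K[X]).roots.map fun r => X - C r).prod = X ^ (q+1) + 1 := by
  classical
  set g : K[X] := X ^ (q+1) + 1 with hg
  set f : K[X] := X ^ (q^2) - X with hf
  have hq1 : 1 < q ^ 2 := by nlinarith
  have hdvd : g ∣ f := by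
    obtain ⟨c, hc⟩ := hodd
    obtain ⟨k, hk⟩ : 2 ∣ q - 1 := ⟨c, by omega⟩
    have h1 : g ∣ (X ^ (q+1) : K[X]) ^ 2 - 1 :=
      ⟨(X ^ (q+1) : K[X]) - 1, by rw [hg]; ring⟩
    have h2 : ((X ^ (q+1) : K[X]) ^ 2 - 1) ∣ (((X ^ (q+1) : K[X]) ^ 2) ^ k - 1 ^ k) :=
      sub_dvd_pow_sub_pow _ _ k
    have h3 : ((X ^ (q+1) : K[X]) ^ 2) ^ k = X ^ (q ^ 2 - 1) := by
      rw [← pow_mul, ← pow_mul]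
      congr 1
      have : q - 1 = 2 * k := hk
      nlinarith [Nat.sub_add_cancel (by omega : 1 ≤ q), Nat.sub_add_cancel (by omega : 1 ≤ q^2)]
    have h4 : (X ^ (q ^ 2 - 1) - 1 : K[X]) ∣ f := by
      refine ⟨X, ?_⟩
      rw [hf, sub_mul, one_mul, ← pow_succ, Nat.sub_add_cancel (by omega : 1 ≤ q ^ 2)]
    calc g ∣ (X ^ (q+1) : K[X]) ^ 2 - 1 := h1
      _ ∣ ((X ^ (q+1) : K[X]) ^ 2) ^ k - 1 := by simpa using h2
      _ = X ^ (q ^ 2 - 1) - 1 := by rw [h3]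
      _ ∣ f := h4
  have hfne : f ≠ 0 := FiniteField.X_pow_card_sub_X_ne_zero K hq1
  have hfsep : f.Separable := by
    rw [Polynomial.separable_def]
    have hd : derivative f = -1 := by
      have : ((q ^ 2 : ℕ) : K) = 0 := by rw [← hcard]; exact FiniteField.cast_card_eq_zero K
      simp [hf, derivative_sub, derivative_X_pow, this]
    rw [hd]
    exact isCoprime_one_right.neg_right
  have hfsplits : f.Splits := by
    rw [Polynomial.splits_iff_card_roots]
    have : f.roots = Finset.univ.val := by
      rw [hf, ← hcard]; exact FiniteField.roots_X_pow_card_sub_X K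
    rw [this, FiniteField.X_pow_card_sub_X_natDegree_eq K hq1, ← hcard]
    simp [Finset.card_univ]
  have hgsplits : g.Splits := hfsplits.of_dvd hfne hdvd
  have hgsep : g.Separable := hfsep.of_dvd hdvd
  have hgdeg : g.natDegree = q + 1 := by
    rw [hg, ← C_1, natDegree_X_pow_add_C]
  have hcardroots : Multiset.card g.roots = q + 1 := by
    rw [← hgdeg]
    exact (Polynomial.splits_iff_card_roots.mp hgsplits)
  refine ⟨hcardroots, nodup_roots hgsep, ?_⟩
  have hmonic : g.Monic := by rw [hg, ← C_1]; exact monic_X_pow_add_C _ (by omega)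
  exact prod_multiset_X_sub_C_of_monic_of_roots_card_eq hmonic (by rw [hcardroots, hgdeg])

theorem stmt18 (p n q : ℕ) [Fact p.Prime] (hp : p ≠ 2) (hn : 0 < n) (hq : q = p ^ n)
    (hq4 : q % 4 = 1)
    (α : Fin ((q - 1) / 4) → GaloisField p (2 * n))
    (hα : (⋃ i, ({α i, -α i, (α i)⁻¹, -(α i)⁻¹} : Set (GaloisField p (2 * n)))) =
      {β : GaloisField p (2 * n) | β ^ (q + 1) + 1 = 0 ∧ β ^ 2 + 1 ≠ 0})
    (u v : RatFunc (GaloisField p (2 * n)))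
    (hu : u = 1 / (RatFunc.X ^ q - RatFunc.X))
    (hv : v = RatFunc.X ^ (q + 1) / (RatFunc.X ^ q - RatFunc.X)) :
    u ^ q * v + u * v ^ q =
      (2 * (u * v) + 1) *
        ∏ i : Fin ((q - 1) / 4),
          (1 + 4 * (u * v) - RatFunc.C ((α i + α i ^ q) ^ 2) * (u * v) ^ 2) := by
  classical
  haveI : Fintype (GaloisField p (2 * n)) := Fintype.ofFinite (GaloisField p (2 * n))
  have hp3 : 3 ≤ p := by
    have := (Fact.out : p.Prime).two_le
    omega
  have hq3 : 3 ≤ q := by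
    calc 3 ≤ p := hp3
    _ ≤ p ^ n := Nat.le_self_pow hn.ne' p
    _ = q := hq.symm
  have hqodd : Odd q := by
    rw [hq]; exact ((Fact.out : p.Prime).odd_of_ne_two hp).pow
  have hcardK : Fintype.card (GaloisField p (2 * n)) = q ^ 2 := by
    rw [Fintype.card_eq_nat_card, GaloisField.card (p := p) (n := 2*n) (by omega), hq,
      ← pow_mul, two_mul, pow_add]
    rw [mul_comm, pow_mul, sq]
  obtain ⟨hcr, hnodup, hprod⟩ := aux_roots (by omega) hqodd hcardK
  set g : (GaloisField p (2 * n))[X] := X ^ (q+1) + 1 with hg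
  have hgne : g ≠ 0 := by
    have : g.natDegree = q + 1 := by rw [hg, ← C_1, natDegree_X_pow_add_C]
    intro h
    rw [h, natDegree_zero] at this
    omega
  have hmem : ∀ β : (GaloisField p (2 * n)), β ∈ g.roots ↔ β ^ (q+1) + 1 = 0 := by
    intro β
    rw [mem_roots hgne, IsRoot.def, hg]
    simp
  -- square root of -1
  obtain ⟨i, hi⟩ : IsSquare (-1 : (GaloisField p (2 * n))) := by
    rw [FiniteField.isSquare_neg_one_iff, hcardK]
    obtain ⟨k, hk⟩ : ∃ k, q = 4 * k + 1 := ⟨q / 4, by omega⟩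
    have : q ^ 2 = 4 * (4 * k ^ 2 + 2 * k) + 1 := by rw [hk]; ring
    omega
  have hi2 : i ^ 2 = -1 := by rw [sq, ← hi]
  have hchar2 : (2 : (GaloisField p (2 * n))) ≠ 0 := by
    have : ringChar (GaloisField p (2 * n)) ≠ 2 := by
      rw [ringChar.eq (GaloisField p (2 * n)) p]; exact_mod_cast hp
    exact Ring.two_ne_zero this
  have hi0 : i ≠ 0 := by
    intro h
    rw [h] at hi2
    simp at hi2
  have hine : i ≠ -i := by
    intro h
    apply hi0
    have : 2 * i = 0 := by linear_combination h
    exact (mul_eq_zero.mp this).resolve_left hchar2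
  have hiq : i ^ (q + 1) = -1 := by
    obtain ⟨k, hk⟩ : ∃ k, q = 4 * k + 1 := ⟨q / 4, by omega⟩
    have : q + 1 = 2 * (2 * k + 1) := by omega
    rw [this, pow_mul, hi2]
    exact Odd.neg_one_pow ⟨k, by ring⟩
  have hev : Even (q+1) := ⟨(q+1)/2, by omega⟩
  have hiq' : (-i) ^ (q + 1) = -1 := by
    rw [hev.neg_pow, hiq]
  -- β² + 1 = 0 iff β = ± i
  have hsq : ∀ β : (GaloisField p (2 * n)), β ^ 2 + 1 = 0 ↔ (β = i ∨ β = -i) := by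
    intro β
    constructor
    · intro h
      have : (β - i) * (β + i) = 0 := by linear_combination h - hi2
      rcases mul_eq_zero.mp this with h' | h'
      · exact Or.inl (sub_eq_zero.mp h')
      · exact Or.inr (eq_neg_of_add_eq_zero_left h')
    · rintro (rfl | rfl)
      · rw [hi2]; ring
      · rw [show ((-i):(GaloisField p (2 * n)))^2 = i^2 by ring, hi2]; ring
  -- counting part
  have h4m : 4 * ((q - 1) / 4) = q - 1 := by omega
  set cls : Fin ((q - 1) / 4) → Multiset (GaloisField p (2 * n)) := fun j => {α j, -α j, (α j)⁻¹, -(α j)⁻¹} with hcls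
  set M : Multiset (GaloisField p (2 * n)) := (Finset.univ.val : Multiset (Fin ((q - 1) / 4))).bind cls with hM
  have hcM : Multiset.card M = 4 * ((q - 1) / 4) := by
    rw [hM, Multiset.card_bind]
    have : Multiset.map (Multiset.card ∘ cls) (Finset.univ : Finset (Fin ((q - 1) / 4))).val
        = Multiset.map (fun _ => 4) (Finset.univ : Finset (Fin ((q - 1) / 4))).val := by
      apply Multiset.map_congr rfl
      intro x _
      simp [hcls]
    rw [this, Multiset.map_const', Multiset.sum_replicate, smul_eq_mul]
    simp [Finset.card_univ, mul_comm]
  set S : Finset (GaloisField p (2 * n)) := g.roots.toFinset \ {i, -i} with hS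
  have hSmem : ∀ x : (GaloisField p (2 * n)), x ∈ S ↔ (x ^ (q+1) + 1 = 0 ∧ x ^ 2 + 1 ≠ 0) := by
    intro x
    rw [hS, Finset.mem_sdiff, Multiset.mem_toFinset, hmem]
    simp only [Finset.mem_insert, Finset.mem_singleton]
    constructor
    · rintro ⟨h1, h2⟩; exact ⟨h1, fun h => h2 ((hsq x).mp h)⟩
    · rintro ⟨h1, h2⟩; exact ⟨h1, fun h => h2 ((hsq x).mpr h)⟩
  have hMS : ∀ x : (GaloisField p (2 * n)), x ∈ M ↔ x ∈ S := by
    intro x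
    have hset : (x ∈ ⋃ j, ({α j, -α j, (α j)⁻¹, -(α j)⁻¹} : Set (GaloisField p (2 * n)))) ↔ x ∈ S := by
      rw [hα, hSmem x]
      rfl
    rw [← hset, hM]
    rw [Multiset.mem_bind]
    simp [hcls, Set.mem_iUnion]
  have hiroot : i ∈ g.roots := (hmem i).mpr (by rw [hiq]; ring)
  have hiroot' : -i ∈ g.roots := (hmem (-i)).mpr (by rw [hiq']; ring)
  have hScard : S.card = q - 1 := by
    rw [hS, Finset.card_sdiff_of_subset]
    · rw [Multiset.toFinset_card_eq_card_iff_nodup.mpr hnodup, hcr,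
        Finset.card_insert_of_notMem (by simpa using hine), Finset.card_singleton]
      omega
    · intro x hx
      simp only [Finset.mem_insert, Finset.mem_singleton] at hx
      rcases hx with rfl | rfl
      · exact Multiset.mem_toFinset.mpr hiroot
      · exact Multiset.mem_toFinset.mpr hiroot'
  have hMcard : Multiset.card M = q - 1 := by rw [hcM, h4m]
  have hMval : M = S.val := by
    have hded : M.dedup = S.val := by
      have : M.toFinset = S := by
        ext x
        rw [Multiset.mem_toFinset, hMS]
      rw [← Multiset.toFinset_val, this]
    have hMd : M.dedup = M := by
      apply Multiset.eq_of_le_of_card_le (Multiset.dedup_le M)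
      rw [hded]
      have hvS : Multiset.card S.val = S.card := rfl
      rw [hvS, hScard, hMcard]
    rw [← hMd, hded]
  have hiM : i ∉ M := by
    intro h
    exact ((hSmem i).mp ((hMS i).mp h)).2 (by rw [hi2]; ring)
  have hiM' : -i ∉ M := by
    intro h
    exact ((hSmem (-i)).mp ((hMS (-i)).mp h)).2
      (by rw [show ((-i):(GaloisField p (2 * n)))^2 = i^2 by ring, hi2]; ring)
  have hrts : g.roots = i ::ₘ -i ::ₘ M := by
    symm
    apply Multiset.eq_of_le_of_card_le
    · rw [Multiset.le_iff_subset]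
      · intro x hx
        rcases Multiset.mem_cons.mp hx with rfl | hx
        · exact hiroot
        rcases Multiset.mem_cons.mp hx with rfl | hx
        · exact hiroot'
        · exact (hmem x).mpr ((hSmem x).mp ((hMS x).mp hx)).1
      · refine Multiset.nodup_cons.mpr ⟨?_, Multiset.nodup_cons.mpr ⟨hiM', ?_⟩⟩
        · intro h
          rcases Multiset.mem_cons.mp h with h | h
          · exact hine h
          · exact hiM h
        · rw [hMval]; exact S.nodup
    · rw [hcr]
      simp only [Multiset.card_cons, hMcard]
      omega
  -- RatFunc part
  set Y : RatFunc (GaloisField p (2 * n)) := RatFunc.X with hYdef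
  have hY0 : Y ≠ 0 := RatFunc.X_ne_zero
  set s : RatFunc (GaloisField p (2 * n)) := Y ^ q - Y with hsdef
  have hs0 : s ≠ 0 := by
    have hpoly : (X ^ q - X : (GaloisField p (2 * n))[X]) ≠ 0 := FiniteField.X_pow_card_sub_X_ne_zero (GaloisField p (2 * n)) (by omega)
    have : s = algebraMap (GaloisField p (2 * n))[X] (RatFunc (GaloisField p (2 * n))) (X ^ q - X) := by
      rw [map_sub, map_pow, RatFunc.algebraMap_X]
    rw [this]
    exact RatFunc.algebraMap_ne_zero hpoly
  have hs0' : Y ^ q - Y ≠ 0 := by rw [← hsdef]; exact hs0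
  have hw : u * v = Y ^ (q+1) / s ^ 2 := by
    rw [hu, hv, sq, div_mul_div_comm, one_mul]
  have hLHS : u ^ q * v + u * v ^ q = (Y ^ (q+1) + (Y ^ (q+1)) ^ q) / s ^ (q+1) := by
    rw [hu, hv, div_pow, div_pow, one_pow, div_mul_div_comm, div_mul_div_comm, one_mul,
      one_mul, ← pow_succ, ← pow_succ', ← add_div]
  have hαfacts : ∀ j : Fin ((q - 1) / 4), α j ^ (q+1) = -1 ∧ α j ≠ 0 := by
    intro j
    have hmem' : α j ∈ {β : (GaloisField p (2 * n)) | β ^ (q + 1) + 1 = 0 ∧ β ^ 2 + 1 ≠ 0} := by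
      rw [← hα]
      exact Set.mem_iUnion.mpr ⟨j, by simp⟩
    have h1 : α j ^ (q+1) = -1 := eq_neg_of_add_eq_zero_left hmem'.1
    refine ⟨h1, fun h => ?_⟩
    rw [h, zero_pow (by omega : q + 1 ≠ 0)] at h1
    exact one_ne_zero (by linear_combination h1 : (1:(GaloisField p (2 * n))) = 0)
  have hkey : ∀ j : Fin ((q - 1) / 4), 1 + 4 * (u*v) - RatFunc.C ((α j + α j ^ q) ^ 2) * (u*v) ^ 2
      = ((cls j).map (fun β => Y ^ q - RatFunc.C β * Y)).prod / s ^ 4 := by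
    intro j
    obtain ⟨h1, h2⟩ := hαfacts j
    have hαq : α j ^ q = -(α j)⁻¹ := by
      have hh : α j ^ q * α j = -1 := by rw [← pow_succ]; exact h1
      field_simp
      linear_combination hh
    have ha0 : RatFunc.C (α j) ≠ 0 := by
      rw [← RatFunc.algebraMap_C]
      exact RatFunc.algebraMap_ne_zero (Polynomial.C_ne_zero.mpr h2)
    have hCβ : RatFunc.C ((α j + α j ^ q) ^ 2)
        = (RatFunc.C (α j) - (RatFunc.C (α j))⁻¹)^2 := by
      rw [hαq, ← sub_eq_add_neg, map_pow, map_sub, map_inv₀]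
    have hprodj : ((cls j).map (fun β => Y ^ q - RatFunc.C β * Y)).prod
        = (Y^q - RatFunc.C (α j)*Y) * (Y^q - (-RatFunc.C (α j))*Y) *
          (Y^q - (RatFunc.C (α j))⁻¹*Y) * (Y^q - (-(RatFunc.C (α j))⁻¹)*Y) := by
      simp only [hcls, Multiset.insert_eq_cons, Multiset.map_cons, Multiset.map_singleton,
        Multiset.prod_cons, Multiset.prod_singleton, map_neg, map_inv₀]
      ring
    rw [hCβ, hprodj, hw, hsdef]
    have hYq : Y ^ (q+1) = Y^q * Y := pow_succ Y q
    rw [hYq]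
    field_simp
    ring
  have hCi : RatFunc.C i * RatFunc.C i = -1 := by
    rw [← map_mul, ← sq, hi2, map_neg, map_one]
  have hN0 : 2 * (u*v) + 1
      = ((Y^q - RatFunc.C i * Y) * (Y^q - RatFunc.C (-i) * Y)) / s^2 := by
    have hexpand : (Y^q - RatFunc.C i * Y) * (Y^q - RatFunc.C (-i) * Y)
        = (Y^q)^2 + Y^2 := by
      rw [map_neg]
      linear_combination (-(Y^2)) * hCi
    rw [hexpand, hw, hsdef]
    field_simp
    ring
  have hbigfac : ∀ β : GaloisField p (2 * n),
      Y ^ q - RatFunc.C β * Y = Y * (Y ^ (q-1) - RatFunc.C β) := by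
    intro β
    rw [mul_sub]
    have hq' : Y * Y ^ (q - 1) = Y ^ q := by
      rw [← pow_succ']
      congr 1
      omega
    rw [hq']
    ring
  have haeval : (g.roots.map (fun β => Y ^ (q-1) - RatFunc.C β)).prod
      = (Y ^ (q-1)) ^ (q+1) + 1 := by
    have h := congrArg (Polynomial.aeval (Y ^ (q-1) : RatFunc (GaloisField p (2 * n)))) hprod
    rw [map_multiset_prod, Multiset.map_map] at h
    simp only [Function.comp, map_sub, Polynomial.aeval_X, Polynomial.aeval_C,
      RatFunc.algebraMap_eq_C] at h
    rw [hg] at h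
    simp only [map_add, map_pow, Polynomial.aeval_X, map_one] at h
    exact h
  have hbig : (g.roots.map (fun β => Y ^ q - RatFunc.C β * Y)).prod
      = Y ^ (q+1) + (Y ^ (q+1)) ^ q := by
    have h1 : (g.roots.map (fun β => Y ^ q - RatFunc.C β * Y))
        = (g.roots.map (fun β => Y * (Y ^ (q-1) - RatFunc.C β))) :=
      Multiset.map_congr rfl (fun β _ => hbigfac β)
    rw [h1, Multiset.prod_map_mul, Multiset.map_const', Multiset.prod_replicate, hcr, haeval]
    obtain ⟨k, rfl⟩ : ∃ k, q = k + 1 := ⟨q - 1, by omega⟩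
    simp only [Nat.add_sub_cancel]
    rw [← pow_mul]
    ring
  have hRHSprod : (2 * (u * v) + 1) *
      ∏ j : Fin ((q - 1) / 4),
        (1 + 4 * (u * v) - RatFunc.C ((α j + α j ^ q) ^ 2) * (u * v) ^ 2)
      = (g.roots.map (fun β => Y ^ q - RatFunc.C β * Y)).prod / s ^ (q+1) := by
    rw [Finset.prod_congr rfl (fun j _ => hkey j), Finset.prod_div_distrib,
      Finset.prod_const, Finset.card_univ, Fintype.card_fin, hN0, div_mul_div_comm]
    congr 1
    · rw [hrts, Multiset.map_cons, Multiset.map_cons, Multiset.prod_cons, Multiset.prod_cons,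
        hM, Multiset.map_bind, Multiset.prod_bind, ← Finset.prod_eq_multiset_prod]
      ring
    · rw [← pow_mul, ← pow_add]
      congr 1
      omega
  rw [hLHS, hRHSprod, hbig]
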